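/- arXiv:2511.23223 — 10 statements merged into one kernel-verified Lean document; each statement's English description precedes it below -/
import Mathlib

section
/- For every non-negative integer r, there do not exist non-negative integers x, y, z, w such that x² + y² + z² + w² = 4^(2r+1)·6 and 3x + 10y ∈ 𝒮. -/
lemma zmod8_key : ∀ a b c d : ZMod 8, a^2+b^2+c^2+d^2 = 0 →
    (ZMod.castHom (by norm_num : (2:ℕ) ∣ 8) (ZMod 2)) a = 0 ∧
    (ZMod.castHom (by norm_num : (2:ℕ) ∣ 8) (ZMod 2)) b = 0 ∧
    (ZMod.castHom (by norm_num : (2:ℕ) ∣ 8) (ZMod 2)) c = 0 ∧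
    (ZMod.castHom (by norm_num : (2:ℕ) ∣ 8) (ZMod 2)) d = 0 := by decide

lemma even4 (x y z w n : ℕ) (h : x^2+y^2+z^2+w^2 = 8*n) :
    2 ∣ x ∧ 2 ∣ y ∧ 2 ∣ z ∧ 2 ∣ w := by
  have h8 : (x:ZMod 8)^2 + (y:ZMod 8)^2 + (z:ZMod 8)^2 + (w:ZMod 8)^2 = 0 := by
    have := congrArg (Nat.cast : ℕ → ZMod 8) h
    push_cast at this
    rw [this]
    simp [show (8:ZMod 8) = 0 by decide]
  have := zmod8_key _ _ _ _ h8
  simp only [map_natCast] at this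
  refine ⟨?_, ?_, ?_, ?_⟩ <;>
    [exact (ZMod.natCast_eq_zero_iff _ _).mp this.1;
     exact (ZMod.natCast_eq_zero_iff _ _).mp this.2.1;
     exact (ZMod.natCast_eq_zero_iff _ _).mp this.2.2.1;
     exact (ZMod.natCast_eq_zero_iff _ _).mp this.2.2.2]

lemma base_check : ∀ x y z w : Fin 5, ∀ k : Fin 8,
    x.1^2+y.1^2+z.1^2+w.1^2 = 24 → k.1^2 ≠ 3*x.1+10*y.1 := by decide

/-- For every non-negative integer `r`, there do not exist non-negative integers
`x, y, z, w` such that `x² + y² + z² + w² = 4^(2r+1)·6` and `3x + 10y` is a square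
of an integer. -/
theorem no_representation_four_power_six (r : ℕ) :
    ¬ ∃ x y z w : ℕ, x ^ 2 + y ^ 2 + z ^ 2 + w ^ 2 = 4 ^ (2 * r + 1) * 6 ∧
      ∃ m : ℤ, (3 * x + 10 * y : ℤ) = m ^ 2 := by
  induction r with
  | zero =>
    rintro ⟨x, y, z, w, hsum, m, hm⟩
    norm_num at hsum
    -- natural-number square
    set k := m.natAbs with hk
    have hksq : k ^ 2 = 3 * x + 10 * y := by
      have : ((3 * x + 10 * y : ℕ) : ℤ) = (k : ℤ) ^ 2 := by
        push_cast
        rw [Int.natAbs_sq]  -- maybe wrong name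
        linarith [hm]
      exact_mod_cast this.symm
    have hx : x ≤ 4 := by nlinarith
    have hy : y ≤ 4 := by nlinarith
    have hz : z ≤ 4 := by nlinarith
    have hw : w ≤ 4 := by nlinarith
    have hkb : k ≤ 7 := by nlinarith
    exact base_check ⟨x, by omega⟩ ⟨y, by omega⟩ ⟨z, by omega⟩ ⟨w, by omega⟩
      ⟨k, by omega⟩ hsum hksq
  | succ r ih =>
    rintro ⟨x, y, z, w, hsum, m, hm⟩
    have h16 : x^2+y^2+z^2+w^2 = 16 * (4 ^ (2*r+1) * 6) := by
      rw [hsum, show 2*(r+1)+1 = (2*r+1)+2 by ring, pow_add]; ring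
    obtain ⟨⟨a, rfl⟩, ⟨b, rfl⟩, ⟨c, rfl⟩, ⟨d, rfl⟩⟩ :=
      even4 x y z w (2 * (4 ^ (2*r+1) * 6)) (by linarith)
    have e : (4:ℕ)^(2*r+1) = 4 * 4^(2*r) := by rw [pow_succ]; ring
    have h4 : a^2+b^2+c^2+d^2 = 8 * (4 ^ (2*r) * 12) := by nlinarith [h16, e]
    obtain ⟨⟨a', rfl⟩, ⟨b', rfl⟩, ⟨c', rfl⟩, ⟨d', rfl⟩⟩ :=
      even4 a b c d (4 ^ (2*r) * 12) h4
    have hsum' : a'^2+b'^2+c'^2+d'^2 = 4 ^ (2*r+1) * 6 := by nlinarith [h16, e]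
    -- m is even
    have hmdvd : (2:ℤ) ∣ m := by
      refine Int.prime_two.dvd_of_dvd_pow (n := 2) ?_
      rw [← hm]; push_cast; ring_nf
      exact ⟨6*a' + 20*b', by ring⟩
    obtain ⟨m', rfl⟩ := hmdvd
    have hm' : (3 * a' + 10 * b' : ℤ) = m' ^ 2 := by
      push_cast at hm; linarith [hm]
    exact ih ⟨a', b', c', d', hsum', m', hm'⟩
end

section
/- Let a, b, c, d, m, n be non-negative real numbers with a² + b² + c² + d² ≠ 0, and suppose x, y, z, w are real numbers satisfying x² + y² + z² + w² = n and ax + by + cz + dw = m. If m ≥ √((a² + b² + c² + d² − min({a², b², c², d²} \ {0}))·n), where min({a², b², c², d²} \ {0}) denotes the smallest nonzero value among a², b², c², d², then all four numbers ax, by, cz, dw are non-negative. -/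
lemma sun_pos_aux (a b c d x y z w m n μ : ℝ)
    (hm : 0 ≤ m) (hn : 0 ≤ n)
    (hsum : x ^ 2 + y ^ 2 + z ^ 2 + w ^ 2 = n)
    (hlin : a * x + b * y + c * z + d * w = m)
    (hμa : a ≠ 0 → μ ≤ a ^ 2)
    (hm2 : (a ^ 2 + b ^ 2 + c ^ 2 + d ^ 2 - μ) * n ≤ m ^ 2) : 0 ≤ a * x := by
  by_contra h
  push_neg at h
  have hane : a ≠ 0 := by
    intro h0; rw [h0] at h; simp at h
  have hμ := hμa hane
  have hcauchy : (b * y + c * z + d * w) ^ 2 ≤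
      (b ^ 2 + c ^ 2 + d ^ 2) * (y ^ 2 + z ^ 2 + w ^ 2) := by
    nlinarith [sq_nonneg (b*z - c*y), sq_nonneg (b*w - d*y), sq_nonneg (c*w - d*z)]
  have hx2 : 0 ≤ y ^ 2 + z ^ 2 + w ^ 2 := by positivity
  nlinarith [sq_nonneg x, sq_nonneg (a*x), mul_nonneg (sub_nonneg.2 hμ) hn,
    mul_nonneg (mul_nonneg hm hm) (sq_nonneg x),
    mul_nonneg (by positivity : (0:ℝ) ≤ b^2+c^2+d^2) (sq_nonneg x),
    mul_pos (neg_pos.2 h) (neg_pos.2 h)]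

/-- Sun's positivity lemma: if `a, b, c, d, m, n` are non-negative reals with
`a² + b² + c² + d² ≠ 0`, and `x, y, z, w` are reals with `x² + y² + z² + w² = n` and
`ax + by + cz + dw = m`, and if
`m ≥ √((a² + b² + c² + d² − min({a², b², c², d²} \ {0}))·n)`, then
`ax, by, cz, dw` are all non-negative. -/
theorem sun_positivity_lemma (a b c d m n x y z w : ℝ)
    (ha : 0 ≤ a) (hb : 0 ≤ b) (hc : 0 ≤ c) (hd : 0 ≤ d) (hm : 0 ≤ m) (hn : 0 ≤ n)
    (habcd : a ^ 2 + b ^ 2 + c ^ 2 + d ^ 2 ≠ 0)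
    (hsum : x ^ 2 + y ^ 2 + z ^ 2 + w ^ 2 = n)
    (hlin : a * x + b * y + c * z + d * w = m)
    (hge : m ≥ Real.sqrt ((a ^ 2 + b ^ 2 + c ^ 2 + d ^ 2 -
      sInf (({a ^ 2, b ^ 2, c ^ 2, d ^ 2} : Set ℝ) \ {0})) * n)) :
    0 ≤ a * x ∧ 0 ≤ b * y ∧ 0 ≤ c * z ∧ 0 ≤ d * w := by
  set T : Set ℝ := ({a ^ 2, b ^ 2, c ^ 2, d ^ 2} : Set ℝ) \ {0} with hT
  set μ : ℝ := sInf T with hμdef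
  have hfin : T.Finite :=
    (Set.Finite.insert _ (Set.Finite.insert _ (Set.Finite.insert _
      (Set.finite_singleton _)))).diff
  have hne : T.Nonempty := by
    have : a ^ 2 ≠ 0 ∨ b ^ 2 ≠ 0 ∨ c ^ 2 ≠ 0 ∨ d ^ 2 ≠ 0 := by
      by_contra hc0
      push_neg at hc0
      obtain ⟨h1, h2, h3, h4⟩ := hc0
      exact habcd (by rw [h1, h2, h3, h4]; ring)
    rcases this with h | h | h | h
    · exact ⟨a ^ 2, by simp [hT, h]⟩
    · exact ⟨b ^ 2, by simp [hT, h]⟩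
    · exact ⟨c ^ 2, by simp [hT, h]⟩
    · exact ⟨d ^ 2, by simp [hT, h]⟩
  have hμmem : μ ∈ T := hne.csInf_mem hfin
  have hμle : ∀ e : ℝ, e ∈ T → μ ≤ e := fun e he => csInf_le hfin.bddBelow he
  have hμsub : μ ≤ a ^ 2 + b ^ 2 + c ^ 2 + d ^ 2 := by
    have := hμmem.1
    simp only [Set.mem_insert_iff, Set.mem_singleton_iff] at this
    rcases this with h | h | h | h <;> nlinarith [sq_nonneg a, sq_nonneg b, sq_nonneg c, sq_nonneg d]
  have hE : 0 ≤ (a ^ 2 + b ^ 2 + c ^ 2 + d ^ 2 - μ) * n :=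
    mul_nonneg (by linarith) hn
  have hm2 : (a ^ 2 + b ^ 2 + c ^ 2 + d ^ 2 - μ) * n ≤ m ^ 2 := by
    calc (a ^ 2 + b ^ 2 + c ^ 2 + d ^ 2 - μ) * n
        = Real.sqrt ((a ^ 2 + b ^ 2 + c ^ 2 + d ^ 2 - μ) * n) ^ 2 :=
          (Real.sq_sqrt hE).symm
      _ ≤ m ^ 2 := pow_le_pow_left₀ (Real.sqrt_nonneg _) hge 2
  have hmema : ∀ e : ℝ, e ∈ ({a ^ 2, b ^ 2, c ^ 2, d ^ 2} : Set ℝ) → e ≠ 0 → μ ≤ e :=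
    fun e he h0 => hμle e ⟨he, h0⟩
  refine ⟨?_, ?_, ?_, ?_⟩
  · exact sun_pos_aux a b c d x y z w m n μ hm hn hsum hlin
      (fun h0 => hmema _ (by simp) (pow_ne_zero 2 h0)) hm2
  · refine sun_pos_aux b a c d y x z w m n μ hm hn (by linarith) (by linarith)
      (fun h0 => hmema _ (by simp) (pow_ne_zero 2 h0)) (by rw [show (b ^ 2 + a ^ 2 + c ^ 2 + d ^ 2 - μ) * n = (a ^ 2 + b ^ 2 + c ^ 2 + d ^ 2 - μ) * n from by ring]; exact hm2)
  · refine sun_pos_aux c a b d z x y w m n μ hm hn (by linarith) (by linarith)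
      (fun h0 => hmema _ (by simp) (pow_ne_zero 2 h0)) (by rw [show (c ^ 2 + a ^ 2 + b ^ 2 + d ^ 2 - μ) * n = (a ^ 2 + b ^ 2 + c ^ 2 + d ^ 2 - μ) * n from by ring]; exact hm2)
  · refine sun_pos_aux d a b c w x y z m n μ hm hn (by linarith) (by linarith)
      (fun h0 => hmema _ (by simp) (pow_ne_zero 2 h0)) (by rw [show (d ^ 2 + a ^ 2 + b ^ 2 + c ^ 2 - μ) * n = (a ^ 2 + b ^ 2 + c ^ 2 + d ^ 2 - μ) * n from by ring]; exact hm2)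
end

section
/- Let z be a nonzero element of the 2-adic field ℚ₂. Then z is a norm from ℚ₂(√−1), i.e., z = x² + y² for some x, y ∈ ℚ₂, if and only if z = 2^δ · u for some integer δ and some unit u of the ring ℤ₂ of 2-adic integers satisfying u ≡ 1 (mod 4ℤ₂). -/
open PadicInt

private lemma two_pow_dvd_iff_pf (n : ℕ) (x : ℤ_[2]) :
    toZModPow n x = 0 ↔ (2 : ℤ_[2]) ^ n ∣ x := by
  rw [← RingHom.mem_ker, ker_toZModPow, Ideal.mem_span_singleton]
  norm_num

private lemma unit_mod2_pf {a : ℤ_[2]} (ha : IsUnit a) : toZModPow 1 a = 1 := by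
  haveI : Fact (1 < 2 ^ 1) := ⟨one_lt_two⟩
  have h := (ha.map (toZModPow (p := 2) 1)).ne_zero
  revert h
  generalize toZModPow 1 a = w
  revert w; decide

private lemma cast_comp_pf {m n : ℕ} (h : m ≤ n) (x : ℤ_[2]) :
    ZMod.castHom (pow_dvd_pow 2 h) (ZMod (2 ^ m)) (toZModPow n x) = toZModPow m x := by
  rw [← zmod_cast_comp_toZModPow m n h]
  rfl

private lemma unit_sq_mod8_pf {a : ℤ_[2]} (ha : IsUnit a) : ∃ s, a ^ 2 = 1 + 8 * s := by
  have h3 : ZMod.castHom (pow_dvd_pow 2 (by norm_num : 1 ≤ 3)) (ZMod (2 ^ 1))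
      (toZModPow 3 a) = 1 := by rw [cast_comp_pf (by norm_num : (1:ℕ) ≤ 3), unit_mod2_pf ha]
  have key : ∀ w : ZMod (2 ^ 3),
      ZMod.castHom (pow_dvd_pow 2 (by norm_num : 1 ≤ 3)) (ZMod (2 ^ 1)) w = 1 → w ^ 2 = 1 := by
    decide
  have h0 : toZModPow 3 (a ^ 2 - 1) = 0 := by
    rw [map_sub, map_pow, map_one, key _ h3, sub_self]
  obtain ⟨s, hs⟩ := (two_pow_dvd_iff_pf 3 _).mp h0
  exact ⟨s, by linear_combination hs⟩

private lemma isUnit_of_4dvd_pf {u : ℤ_[2]} (h : (4 : ℤ_[2]) ∣ u - 1) : IsUnit u := by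
  rw [PadicInt.isUnit_iff]
  by_contra hn
  have hlt : ‖u‖ < 1 := lt_of_le_of_ne u.norm_le_one hn
  have h2 : ((2 : ℕ) : ℤ_[2]) ∣ u := (PadicInt.norm_lt_one_iff_dvd u).mp hlt
  have h2' : (2 : ℤ_[2]) ∣ u := by exact_mod_cast h2
  have h41 : (2 : ℤ_[2]) ∣ u - 1 := dvd_trans ⟨2, by norm_num⟩ h
  have hone : (2 : ℤ_[2]) ∣ 1 := by
    have := dvd_sub h2' h41
    simpa using this
  have : IsUnit (2 : ℤ_[2]) := isUnit_of_dvd_one hone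
  have hn2 : ‖(2 : ℤ_[2])‖ = 1 := PadicInt.isUnit_iff.mp this
  have hval : ‖((2 : ℕ) : ℤ_[2])‖ = ((2 : ℕ) : ℝ)⁻¹ := PadicInt.norm_p
  norm_num at hval
  rw [hval] at hn2
  norm_num at hn2

private lemma core_pf (a b : ℤ_[2]) (ha : IsUnit a) :
    ∃ (e : ℕ) (u : ℤ_[2]), IsUnit u ∧ (4 : ℤ_[2]) ∣ u - 1 ∧ a ^ 2 + b ^ 2 = 2 ^ e * u := by
  by_cases hb : IsUnit b
  · obtain ⟨s, hs⟩ := unit_sq_mod8_pf ha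
    obtain ⟨t, ht⟩ := unit_sq_mod8_pf hb
    refine ⟨1, 1 + 4 * (s + t), isUnit_of_4dvd_pf ⟨s + t, by ring⟩, ⟨s + t, by ring⟩, ?_⟩
    linear_combination hs + ht
  · have hblt : ‖b‖ < 1 := lt_of_le_of_ne b.norm_le_one (fun h => hb (PadicInt.isUnit_iff.mpr h))
    have hdvd : ((2 : ℕ) : ℤ_[2]) ∣ b := (PadicInt.norm_lt_one_iff_dvd b).mp hblt
    obtain ⟨c, hc⟩ : (2 : ℤ_[2]) ∣ b := by exact_mod_cast hdvd
    obtain ⟨s, hs⟩ := unit_sq_mod8_pf ha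
    refine ⟨0, 1 + 4 * (2 * s + c ^ 2), isUnit_of_4dvd_pf ⟨2 * s + c ^ 2, by ring⟩,
      ⟨2 * s + c ^ 2, by ring⟩, ?_⟩
    linear_combination hs + (b + 2 * c) * hc


private lemma forward_pf (x y : ℚ_[2]) (hxy : ‖y‖ ≤ ‖x‖) (hx : x ≠ 0) :
    ∃ (δ : ℤ) (u : ℤ_[2]ˣ), x ^ 2 + y ^ 2 = (2 : ℚ_[2]) ^ δ * ((u : ℤ_[2]) : ℚ_[2]) ∧
      (4 : ℤ_[2]) ∣ ((u : ℤ_[2]) - 1) := by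
  have h2 : (2 : ℚ_[2]) ≠ 0 := two_ne_zero
  set m := x.valuation with hm
  set w : ℚ_[2] := x * (2 : ℚ_[2]) ^ (-m) with hw
  have hwnorm : ‖w‖ = 1 := by
    have hx' : ‖x‖ = (2 : ℝ) ^ (-m) := by
      have := Padic.norm_eq_zpow_neg_valuation hx
      push_cast at this
      exact this
    have hz : ‖(2 : ℚ_[2]) ^ (-m)‖ = (2 : ℝ) ^ m := by
      have : ‖(2 : ℚ_[2]) ^ (-m)‖ = ((2 : ℕ) : ℝ) ^ (-(-m)) := by
        exact_mod_cast @Padic.norm_p_zpow 2 _ (-m)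
      rw [this]
      norm_num
    rw [hw, _root_.norm_mul, hx', hz, ← zpow_add₀ (by norm_num : (2:ℝ) ≠ 0)]
    simp
  set W : ℤ_[2] := ⟨w, le_of_eq hwnorm⟩ with hW
  have hWu : IsUnit W := PadicInt.isUnit_iff.mpr hwnorm
  have hxpos : 0 < ‖x‖ := norm_pos_iff.mpr hx
  set b0 : ℚ_[2] := y / x with hb0
  have hb0le : ‖b0‖ ≤ 1 := by
    rw [hb0, norm_div]
    exact div_le_one_of_le₀ hxy (le_of_lt hxpos)
  set B : ℤ_[2] := ⟨b0, hb0le⟩ with hB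
  obtain ⟨e, u, hu, hmod, heq⟩ := core_pf W (W * B) hWu
  have hcast : w ^ 2 + (w * b0) ^ 2 = (2 : ℚ_[2]) ^ e * (u : ℚ_[2]) := by
    have := congrArg (fun r : ℤ_[2] => (r : ℚ_[2])) heq
    push_cast at this
    exact this
  refine ⟨2 * m + e, hu.unit, ?_, by rwa [hu.unit_spec]⟩
  rw [hu.unit_spec]
  have hxw : x = w * (2 : ℚ_[2]) ^ m := by
    rw [hw, mul_assoc, ← zpow_add₀ h2]
    simp
  have hyw : y = b0 * x := by
    rw [hb0]
    field_simp
  have hexp : (2 : ℚ_[2]) ^ (2 * m + (e : ℤ)) = ((2 : ℚ_[2]) ^ m) ^ 2 * (2 : ℚ_[2]) ^ e := by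
    rw [zpow_add₀ h2, two_mul, zpow_add₀ h2, zpow_natCast, sq]
  rw [hexp, hyw, hxw]
  ring_nf
  ring_nf at hcast
  linear_combination ((2:ℚ_[2])^m)^2 * hcast


private lemma sqrt_of_mod8_pf {v : ℤ_[2]} (h : (8 : ℤ_[2]) ∣ v - 1) : ∃ s : ℤ_[2], s ^ 2 = v := by
  obtain ⟨k, hk⟩ := h
  have h2n : ‖(2 : ℤ_[2])‖ = 2⁻¹ := by
    have hval : ‖((2 : ℕ) : ℤ_[2])‖ = ((2 : ℕ) : ℝ)⁻¹ := PadicInt.norm_p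
    norm_num at hval
    rw [hval]
    norm_num
  have hnorm : ‖Polynomial.eval 1 (Polynomial.X ^ 2 - Polynomial.C v)‖ <
      ‖Polynomial.eval 1 (Polynomial.derivative (Polynomial.X ^ 2 - Polynomial.C v))‖ ^ 2 := by
    have he : Polynomial.eval 1 (Polynomial.X ^ 2 - Polynomial.C v) = 1 - v := by simp
    have hd : Polynomial.eval 1 (Polynomial.derivative (Polynomial.X ^ 2 - Polynomial.C v))
        = 2 := by simp; norm_num
    rw [he, hd, h2n]
    have h8 : ‖(8 : ℤ_[2])‖ = 8⁻¹ := by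
      have : (8 : ℤ_[2]) = 2 ^ 3 := by norm_num
      rw [this, norm_pow, h2n]
      norm_num
    have hle : ‖(1 : ℤ_[2]) - v‖ ≤ 8⁻¹ := by
      have : (1 : ℤ_[2]) - v = -(8 * k) := by linear_combination -hk
      rw [this, norm_neg, norm_mul, h8]
      calc 8⁻¹ * ‖k‖ ≤ 8⁻¹ * 1 := by
              exact mul_le_mul_of_nonneg_left k.norm_le_one (by norm_num)
        _ = 8⁻¹ := mul_one _
    calc ‖(1 : ℤ_[2]) - v‖ ≤ 8⁻¹ := hle
      _ < (2⁻¹ : ℝ) ^ 2 := by norm_num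
  obtain ⟨s, hs, -⟩ := hensels_lemma hnorm
  refine ⟨s, ?_⟩
  have : s ^ 2 - v = 0 := by simpa using hs
  linear_combination this

private lemma unit_sum_two_sq_pf {u : ℤ_[2]} (h : (4 : ℤ_[2]) ∣ u - 1) :
    ∃ s t : ℤ_[2], u = s ^ 2 + t ^ 2 := by
  obtain ⟨k, hk⟩ := h
  have h1 : toZModPow 2 u = 1 := by
    have h0 : toZModPow 2 (u - 1) = 0 :=
      (two_pow_dvd_iff_pf 2 _).mpr ⟨k, by rw [hk]; norm_num⟩
    rw [map_sub, map_one, sub_eq_zero] at h0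
    exact h0
  have hcast : ZMod.castHom (pow_dvd_pow 2 (by norm_num : (2:ℕ) ≤ 3)) (ZMod (2 ^ 2))
      (toZModPow 3 u) = 1 := by rw [cast_comp_pf (by norm_num : (2:ℕ) ≤ 3), h1]
  have key : ∀ w : ZMod (2 ^ 3),
      ZMod.castHom (pow_dvd_pow 2 (by norm_num : (2:ℕ) ≤ 3)) (ZMod (2 ^ 2)) w = 1 →
        w = 1 ∨ w = 5 := by decide
  rcases key _ hcast with h8 | h8
  · have : toZModPow 3 (u - 1) = 0 := by rw [map_sub, map_one, h8, sub_self]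
    obtain ⟨c, hc⟩ := (two_pow_dvd_iff_pf 3 _).mp this
    obtain ⟨s, hs⟩ := sqrt_of_mod8_pf (v := u) ⟨c, by linear_combination hc⟩
    exact ⟨s, 0, by linear_combination -hs⟩
  · have h5 : toZModPow 3 (u - 5) = 0 := by
      rw [map_sub, h8, map_ofNat, sub_self]
    obtain ⟨c, hc⟩ := (two_pow_dvd_iff_pf 3 _).mp h5
    obtain ⟨s, hs⟩ := sqrt_of_mod8_pf (v := u - 4) ⟨c, by linear_combination hc⟩
    exact ⟨s, 2, by linear_combination -hs⟩

/-- Let `z` be a nonzero element of `ℚ₂`. Then `z = x² + y²` for some `x, y ∈ ℚ₂`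
(i.e., `z` is a norm from `ℚ₂(√−1)`) if and only if `z = 2^δ · u` for some integer `δ`
and some unit `u` of `ℤ₂` with `u ≡ 1 (mod 4ℤ₂)`. -/
theorem norm_from_Q2_adjoin_i_iff (z : ℚ_[2]) (hz : z ≠ 0) :
    (∃ x y : ℚ_[2], z = x ^ 2 + y ^ 2) ↔
      ∃ (δ : ℤ) (u : ℤ_[2]ˣ), z = (2 : ℚ_[2]) ^ δ * ((u : ℤ_[2]) : ℚ_[2]) ∧
        (4 : ℤ_[2]) ∣ ((u : ℤ_[2]) - 1) := by
  have h2 : (2 : ℚ_[2]) ≠ 0 := two_ne_zero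
  constructor
  · rintro ⟨x, y, rfl⟩
    rcases le_total ‖y‖ ‖x‖ with hle | hle
    · have hx : x ≠ 0 := by
        rintro rfl
        simp only [norm_zero, norm_le_zero_iff] at hle
        subst hle
        simp at hz
      exact forward_pf x y hle hx
    · have hy : y ≠ 0 := by
        rintro rfl
        simp only [norm_zero, norm_le_zero_iff] at hle
        subst hle
        simp at hz
      obtain ⟨δ, u, hequ, hmod⟩ := forward_pf y x hle hy
      exact ⟨δ, u, by rw [add_comm]; exact hequ, hmod⟩
  · rintro ⟨δ, u, rfl, hmod⟩
    obtain ⟨s, t, hst⟩ := unit_sum_two_sq_pf hmod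
    have hst' : ((u : ℤ_[2]) : ℚ_[2]) = (s : ℚ_[2]) ^ 2 + (t : ℚ_[2]) ^ 2 := by
      exact_mod_cast congrArg (fun r : ℤ_[2] => (r : ℚ_[2])) hst
    rcases Int.even_or_odd δ with ⟨c, hc⟩ | ⟨c, hc⟩
    · refine ⟨(2 : ℚ_[2]) ^ c * s, (2 : ℚ_[2]) ^ c * t, ?_⟩
      rw [hst', hc, show c + c = c * 2 by ring, zpow_mul, zpow_two]
      ring
    · refine ⟨(2 : ℚ_[2]) ^ c * (s + t), (2 : ℚ_[2]) ^ c * (s - t), ?_⟩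
      rw [hst', hc, zpow_add₀ h2, show (2:ℤ) * c = c * 2 by ring, zpow_mul, zpow_two, zpow_one]
      ring
end

section
/- Let t be a 2-adic integer. Then there exist x, y, z ∈ ℤ₂ with t = x² + y² + z² if and only if t is NOT of the form 4^δ·(8w + 7) for some non-negative integer δ and some w ∈ ℤ₂. -/
open PadicInt Polynomial

lemma Z2.dvd_of_toZModPow {n : ℕ} {t : ℤ_[2]} {c : ℕ}
    (h : PadicInt.toZModPow n t = (c : ZMod (2 ^ n))) : ((2 : ℤ_[2]) ^ n) ∣ (t - c) := by
  have h0 : PadicInt.toZModPow n (t - (c : ℤ_[2])) = 0 := by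
    rw [map_sub, map_natCast, h, sub_self]
  have := RingHom.mem_ker.mpr h0
  rw [PadicInt.ker_toZModPow, Ideal.mem_span_singleton] at this
  have hc : ((2 : ℕ) : ℤ_[2]) = 2 := by norm_num
  rwa [hc] at this

lemma Z2.eight_dvd_of {t : ℤ_[2]} {c : ℕ}
    (h : PadicInt.toZModPow 3 t = (c : ZMod (2 ^ 3))) : (8 : ℤ_[2]) ∣ (t - c) := by
  rw [show (8 : ℤ_[2]) = 2 ^ 3 by norm_num]
  exact Z2.dvd_of_toZModPow h

lemma Z2.isSquare_of_eight_dvd {u : ℤ_[2]} (h : (8 : ℤ_[2]) ∣ (u - 1)) :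
    ∃ s : ℤ_[2], s ^ 2 = u := by
  set F : Polynomial ℤ_[2] := X ^ 2 - C u with hF
  have heval : F.eval 1 = 1 - u := by simp [hF]
  have hderiv : F.derivative.eval 1 = 2 := by
    simp [hF, derivative_sub, derivative_pow]
  have hnorm8 : ‖u - 1‖ ≤ ((2 : ℕ) : ℝ) ^ (-(3 : ℕ) : ℤ) := by
    rw [PadicInt.norm_le_pow_iff_mem_span_pow, Ideal.mem_span_singleton]
    rw [show ((2 : ℕ) : ℤ_[2]) ^ 3 = 8 by norm_num]
    exact h
  have hlt : ‖F.eval 1‖ < ‖F.derivative.eval 1‖ ^ 2 := by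
    rw [heval, hderiv]
    have h2 : ‖(2 : ℤ_[2])‖ = ((2 : ℕ) : ℝ)⁻¹ := by
      rw [show (2 : ℤ_[2]) = ((2 : ℕ) : ℤ_[2]) by norm_num]
      exact PadicInt.norm_p
    have h1u : ‖(1 : ℤ_[2]) - u‖ = ‖u - 1‖ := by rw [← norm_neg]; ring_nf
    rw [h1u, h2]
    calc ‖u - 1‖ ≤ ((2 : ℕ) : ℝ) ^ (-(3 : ℕ) : ℤ) := hnorm8
      _ < (((2 : ℕ) : ℝ)⁻¹) ^ 2 := by norm_num
  obtain ⟨z, hz, -⟩ := hensels_lemma hlt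
  have : z ^ 2 - u = 0 := by simpa [hF] using hz
  exact ⟨z, sub_eq_zero.mp this⟩

/-- If `t ≡ a^2 + b^2 + 1 mod 8` then `t` is a sum of three squares. -/
lemma Z2.rep_of (t a b : ℤ_[2]) (h : (8 : ℤ_[2]) ∣ (t - a ^ 2 - b ^ 2 - 1)) :
    ∃ x y z : ℤ_[2], t = x ^ 2 + y ^ 2 + z ^ 2 := by
  obtain ⟨s, hs⟩ := Z2.isSquare_of_eight_dvd (u := t - a ^ 2 - b ^ 2) h
  exact ⟨s, a, b, by rw [hs]; ring⟩

lemma Z2.not_forbidden_sum : ∀ (δ : ℕ) (w x y z : ℤ_[2]),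
    x ^ 2 + y ^ 2 + z ^ 2 ≠ 4 ^ δ * (8 * w + 7) := by
  intro δ
  induction δ with
  | zero =>
    intro w x y z h
    have h8 : ∀ a b c d : ZMod (2 ^ 3), a ^ 2 + b ^ 2 + c ^ 2 ≠ 8 * d + 7 := by decide
    have := congrArg (PadicInt.toZModPow 3) h
    simp only [map_add, map_mul, map_pow, map_ofNat, map_one, pow_zero, one_mul] at this
    exact h8 _ _ _ _ this
  | succ δ ih =>
    intro w x y z h
    have h4 : ∀ a b c : ZMod (2 ^ 2), a ^ 2 + b ^ 2 + c ^ 2 = 0 →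
        (a = ((0 : ℕ) : ZMod (2^2)) ∨ a = ((2 : ℕ) : ZMod (2^2))) ∧
        (b = ((0 : ℕ) : ZMod (2^2)) ∨ b = ((2 : ℕ) : ZMod (2^2))) ∧
        (c = ((0 : ℕ) : ZMod (2^2)) ∨ c = ((2 : ℕ) : ZMod (2^2))) := by decide
    have him : (toZModPow 2 x) ^ 2 + (toZModPow 2 y) ^ 2 + (toZModPow 2 z) ^ 2 = 0 := by
      have h0 := congrArg (PadicInt.toZModPow 2) h
      simp only [map_add, map_mul, map_pow, map_ofNat] at h0
      have h4z : (4 : ZMod (2^2)) ^ (δ + 1) = 0 := by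
        have e : (4 : ZMod (2^2)) = 0 := by decide
        simp [e]
      rw [h0, h4z, zero_mul]
    obtain ⟨hx, hy, hz⟩ := h4 _ _ _ him
    have even_of : ∀ v : ℤ_[2],
        (toZModPow 2 v = ((0:ℕ) : ZMod (2^2)) ∨ toZModPow 2 v = ((2:ℕ) : ZMod (2^2))) →
        (2 : ℤ_[2]) ∣ v := by
      intro v hv
      rcases hv with hv | hv
      · have h0 := Z2.dvd_of_toZModPow hv
        simp only [Nat.cast_zero, sub_zero] at h0
        exact dvd_trans (dvd_pow_self 2 two_ne_zero) h0
      · have h0 := Z2.dvd_of_toZModPow hv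
        have h2 : (2 : ℤ_[2]) ∣ v - 2 := by
          refine dvd_trans (dvd_pow_self 2 two_ne_zero) ?_
          rwa [show ((2:ℕ) : ℤ_[2]) = 2 by norm_num] at h0
        have : (2 : ℤ_[2]) ∣ (v - 2) + 2 := dvd_add h2 dvd_rfl
        simpa using this
    obtain ⟨x', hx'⟩ := even_of x hx
    obtain ⟨y', hy'⟩ := even_of y hy
    obtain ⟨z', hz'⟩ := even_of z hz
    apply ih w x' y' z'
    have h4ne : (4 : ℤ_[2]) ≠ 0 := by norm_num
    apply mul_left_cancel₀ h4ne
    calc (4 : ℤ_[2]) * (x' ^ 2 + y' ^ 2 + z' ^ 2)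
        = x ^ 2 + y ^ 2 + z ^ 2 := by rw [hx', hy', hz']; ring
      _ = 4 ^ (δ + 1) * (8 * w + 7) := h
      _ = 4 * (4 ^ δ * (8 * w + 7)) := by ring

/-- Let `t` be a 2-adic integer. Then `t = x² + y² + z²` for some `x, y, z ∈ ℤ₂` if and
only if `t` is not of the form `4^δ·(8w + 7)` for a non-negative integer `δ` and
`w ∈ ℤ₂`. -/
theorem sum_three_squares_Z2_iff (t : ℤ_[2]) :
    (∃ x y z : ℤ_[2], t = x ^ 2 + y ^ 2 + z ^ 2) ↔
      ¬ ∃ (δ : ℕ) (w : ℤ_[2]), t = 4 ^ δ * (8 * w + 7) := by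
  constructor
  · rintro ⟨x, y, z, rfl⟩ ⟨δ, w, h⟩
    exact Z2.not_forbidden_sum δ w x y z h
  · intro hnot
    by_cases ht : t = 0
    · exact ⟨0, 0, 0, by simp [ht]⟩
    obtain hspec := PadicInt.unitCoeff_spec ht
    rw [show ((2:ℕ):ℤ_[2]) = 2 by norm_num] at hspec
    set u : ℤ_[2] := (PadicInt.unitCoeff ht : ℤ_[2]) with hu
    set v : ℕ := t.valuation with hv
    set q : ℕ := v / 2 with hq
    set s : ℕ := v % 2 with hs
    have hvqs : v = 2 * q + s := by omega
    set m : ℤ_[2] := u * 2 ^ s with hm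
    have htm : t = 4 ^ q * m := by
      rw [hspec, hm]
      rw [show ((2:ℤ_[2]) ^ v) = 4 ^ q * 2 ^ s by
        rw [hvqs, pow_add, pow_mul]; norm_num]
      ring
    have hnotdvd4 : ¬ ((2:ℤ_[2]) ^ 2 ∣ m) := by
      intro hdvd
      have hle : ‖m‖ ≤ ((2:ℕ) : ℝ) ^ (-(2 : ℕ) : ℤ) := by
        rw [PadicInt.norm_le_pow_iff_mem_span_pow, Ideal.mem_span_singleton]
        rwa [show ((2:ℕ) : ℤ_[2]) = 2 by norm_num]
      have hus : s = 0 ∨ s = 1 := by omega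
      have hnu : ‖u‖ = 1 := by rw [hu]; exact PadicInt.norm_units _
      have h2 : ‖(2 : ℤ_[2])‖ = ((2 : ℕ) : ℝ)⁻¹ := by
        rw [show (2 : ℤ_[2]) = ((2 : ℕ) : ℤ_[2]) by norm_num]
        exact PadicInt.norm_p
      rcases hus with hus | hus
      · have : ‖m‖ = 1 := by rw [hm, hus, pow_zero, mul_one, hnu]
        rw [this] at hle; norm_num at hle
      · have : ‖m‖ = ((2:ℕ) : ℝ)⁻¹ := by
          rw [hm, hus, pow_one, norm_mul, hnu, one_mul, h2]
        rw [this] at hle; norm_num at hle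
    have hmain : ∃ x y z : ℤ_[2], m = x ^ 2 + y ^ 2 + z ^ 2 := by
      have hr : ∀ r : ZMod (2^3), r = ((0:ℕ) : ZMod (2^3)) ∨ r = ((1:ℕ):ZMod (2^3)) ∨
          r = ((2:ℕ):ZMod (2^3)) ∨ r = ((3:ℕ):ZMod (2^3)) ∨ r = ((4:ℕ):ZMod (2^3)) ∨
          r = ((5:ℕ):ZMod (2^3)) ∨ r = ((6:ℕ):ZMod (2^3)) ∨ r = ((7:ℕ):ZMod (2^3)) := by
        decide
      rcases hr (toZModPow 3 m) with h | h | h | h | h | h | h | h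
      · exfalso
        apply hnotdvd4
        have h8 := Z2.eight_dvd_of h
        simp only [Nat.cast_zero, sub_zero] at h8
        exact dvd_trans (⟨2, by norm_num⟩ : (2:ℤ_[2])^2 ∣ 8) h8
      · refine Z2.rep_of m 0 0 ?_
        have h8 := Z2.eight_dvd_of h
        rw [show m - 0^2 - 0^2 - 1 = m - ((1:ℕ):ℤ_[2]) by push_cast; ring]
        exact h8
      · refine Z2.rep_of m 1 0 ?_
        have h8 := Z2.eight_dvd_of h
        rw [show m - 1^2 - 0^2 - 1 = m - ((2:ℕ):ℤ_[2]) by push_cast; ring]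
        exact h8
      · refine Z2.rep_of m 1 1 ?_
        have h8 := Z2.eight_dvd_of h
        rw [show m - 1^2 - 1^2 - 1 = m - ((3:ℕ):ℤ_[2]) by push_cast; ring]
        exact h8
      · exfalso
        apply hnotdvd4
        have h8 := Z2.eight_dvd_of h
        have h4m : (2:ℤ_[2])^2 ∣ m - ((4:ℕ):ℤ_[2]) :=
          dvd_trans (⟨2, by norm_num⟩ : (2:ℤ_[2])^2 ∣ 8) h8
        have : (2:ℤ_[2])^2 ∣ (m - ((4:ℕ):ℤ_[2])) + ((4:ℕ):ℤ_[2]) :=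
          dvd_add h4m (by norm_num)
        simpa using this
      · refine Z2.rep_of m 2 0 ?_
        have h8 := Z2.eight_dvd_of h
        rw [show m - 2^2 - 0^2 - 1 = m - ((5:ℕ):ℤ_[2]) by push_cast; ring]
        exact h8
      · refine Z2.rep_of m 2 1 ?_
        have h8 := Z2.eight_dvd_of h
        rw [show m - 2^2 - 1^2 - 1 = m - ((6:ℕ):ℤ_[2]) by push_cast; ring]
        exact h8
      · exfalso
        have h8 := Z2.eight_dvd_of h
        obtain ⟨w, hw⟩ := h8
        refine hnot ⟨q, w, ?_⟩
        rw [htm]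
        congr 1
        have : m - ((7:ℕ):ℤ_[2]) = 8 * w := hw
        push_cast at this
        linear_combination this
    obtain ⟨x, y, z, hxyz⟩ := hmain
    refine ⟨2 ^ q * x, 2 ^ q * y, 2 ^ q * z, ?_⟩
    rw [htm, hxyz]
    rw [show ((4:ℤ_[2]) ^ q) = (2 ^ q)^2 by
      rw [← pow_mul, Nat.mul_comm, pow_mul]; norm_num]
    ring
end

section
/- Let q be an odd prime and let c be a unit of the ring ℤ_q of q-adic integers. Then every element t ∈ ℤ_q can be written as t = x² + c·y² + c·z² with x, y, z ∈ ℤ_q. -/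
open Polynomial

/-- Any element of `ZMod q` is of the form `x² + d y²` when `d ≠ 0` and `q` is odd. -/
lemma zmod_sq_add_mul_sq (q : ℕ) [Fact q.Prime] (hq : Odd q) (d a : ZMod q) (hd : d ≠ 0) :
    ∃ x y : ZMod q, x ^ 2 + d * y ^ 2 = a := by
  have hg : (C d * X ^ 2 + C 0 * X + C (-a)).degree = 2 := Polynomial.degree_quadratic hd
  obtain ⟨x, y, hxy⟩ := FiniteField.exists_root_sum_quadratic
    (f := (X : (ZMod q)[X]) ^ 2) (g := C d * X ^ 2 + C 0 * X + C (-a))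
    (degree_X_pow 2) hg (by rw [ZMod.card]; exact Nat.odd_iff.mp hq)
  refine ⟨x, y, ?_⟩
  simp only [eval_add, eval_mul, eval_pow, eval_X, eval_C, zero_mul, add_zero] at hxy
  linear_combination hxy

/-- Let `q` be an odd prime and `c` a unit of `ℤ_q`. Then every `t ∈ ℤ_q` can be written
as `t = x² + c·y² + c·z²` with `x, y, z ∈ ℤ_q`. -/
theorem universal_ternary_odd_prime (q : ℕ) [Fact q.Prime] (hq : Odd q)
    (c : ℤ_[q]ˣ) (t : ℤ_[q]) :
    ∃ x y z : ℤ_[q], t = x ^ 2 + (c : ℤ_[q]) * y ^ 2 + (c : ℤ_[q]) * z ^ 2 := by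
  haveI : NeZero q := ⟨(Fact.out : q.Prime).ne_zero⟩
  set φ : ℤ_[q] →+* ZMod q := PadicInt.toZMod
  set d : ZMod q := φ (c : ℤ_[q]) with hd_def
  have hd : d ≠ 0 := by
    intro h
    have : d * φ ((c⁻¹ : ℤ_[q]ˣ) : ℤ_[q]) = 1 := by
      rw [hd_def, ← map_mul, ← Units.val_mul, mul_inv_cancel, Units.val_one, map_one]
    rw [h, zero_mul] at this
    exact zero_ne_one this
  obtain ⟨x0, y0, hxy⟩ := zmod_sq_add_mul_sq q hq d (φ (t - (c : ℤ_[q]))) hd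
  set x : ℤ_[q] := (x0.val : ℤ_[q]) with hx_def
  set y : ℤ_[q] := (y0.val : ℤ_[q]) with hy_def
  have hφx : φ x = x0 := by rw [hx_def, map_natCast]; exact ZMod.natCast_rightInverse x0
  have hφy : φ y = y0 := by rw [hy_def, map_natCast]; exact ZMod.natCast_rightInverse y0
  set u : ℤ_[q] := (t - x ^ 2 - (c : ℤ_[q]) * y ^ 2) * ((c⁻¹ : ℤ_[q]ˣ) : ℤ_[q]) with hu_def
  have hcu : (c : ℤ_[q]) * u = t - x ^ 2 - (c : ℤ_[q]) * y ^ 2 := by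
    rw [hu_def, mul_comm, mul_assoc, ← Units.val_mul, inv_mul_cancel, Units.val_one, mul_one]
  -- `φ u = 1`
  have hφu : φ u = 1 := by
    have h1 : φ (t - x ^ 2 - (c : ℤ_[q]) * y ^ 2) = d := by
      have h := hxy
      rw [map_sub] at h
      rw [map_sub, map_sub, map_mul, map_pow, map_pow, hφx, hφy]
      linear_combination -h
    have h2 : d * φ ((c⁻¹ : ℤ_[q]ˣ) : ℤ_[q]) = 1 := by
      rw [hd_def, ← map_mul, ← Units.val_mul, mul_inv_cancel, Units.val_one, map_one]
    rw [hu_def, map_mul, h1, h2]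
  -- `‖1 - u‖ < 1`
  have hnorm : ‖(1 : ℤ_[q]) - u‖ < 1 := by
    rw [PadicInt.norm_lt_one_iff_dvd, ← Ideal.mem_span_singleton,
      ← PadicInt.maximalIdeal_eq_span_p, ← PadicInt.ker_toZMod, RingHom.mem_ker,
      map_sub, map_one, hφu, sub_self]
  -- `‖2‖ = 1`
  have h2norm : ‖(2 : ℤ_[q])‖ = 1 := by
    have hle : ‖(2 : ℤ_[q])‖ ≤ 1 := PadicInt.norm_le_one _
    have : ¬ ‖((2 : ℤ) : ℤ_[q])‖ < 1 := by
      rw [PadicInt.norm_int_lt_one_iff_dvd]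
      intro h
      have hq2 : q = 2 :=
        (Nat.prime_dvd_prime_iff_eq Fact.out Nat.prime_two).mp (Int.natCast_dvd_natCast.mp h)
      rw [hq2] at hq
      exact (by decide : ¬ Odd 2) hq
    push_cast at this
    exact le_antisymm hle (not_lt.mp this)
  -- Hensel's lemma for `F = X² - u` at `a = 1`
  have hensel : ∃ z : ℤ_[q], z ^ 2 = u := by
    set F : (ℤ_[q])[X] := X ^ 2 - C u with hF
    have hF1 : F.eval 1 = 1 - u := by simp [hF]
    have hFd : F.derivative.eval 1 = 2 := by
      simp [hF, derivative_sub, derivative_X_pow, one_add_one_eq_two]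
    have key : ‖F.eval 1‖ < ‖F.derivative.eval 1‖ ^ 2 := by
      rw [hF1, hFd, h2norm, one_pow]; exact hnorm
    obtain ⟨z, hz, -⟩ := hensels_lemma key
    refine ⟨z, ?_⟩
    have : z ^ 2 - u = 0 := by simpa [hF] using hz
    exact sub_eq_zero.mp this
  obtain ⟨z, hz⟩ := hensel
  exact ⟨x, y, z, by rw [hz, hcu]; ring⟩
end

section
/- Let c be a unit of the ring ℤ₂ of 2-adic integers with c ≡ 1 (mod 4ℤ₂). Then the ternary quadratic form x² + c·y² + c·z² is anisotropic over ℚ₂: if x, y, z ∈ ℚ₂ satisfy x² + c·y² + c·z² = 0, then x = y = z = 0. -/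
open PadicInt


lemma two_dvd_of_sq (c : ℤ_[2]ˣ) (hc : (4 : ℤ_[2]) ∣ ((c : ℤ_[2]) - 1))
    (a b d : ℤ_[2]) (h : a ^ 2 + (c : ℤ_[2]) * b ^ 2 + (c : ℤ_[2]) * d ^ 2 = 0) :
    2 ∣ a ∧ 2 ∣ b ∧ 2 ∣ d := by
  set f := (PadicInt.toZModPow 2 : ℤ_[2] →+* ZMod (2 ^ 2)) with hf
  have hfc : f (c : ℤ_[2]) = 1 := by
    have : f ((c : ℤ_[2]) - 1) = 0 := by
      rw [← RingHom.mem_ker, PadicInt.ker_toZModPow]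
      rw [Ideal.mem_span_singleton]
      simpa [show (2:ℤ_[2]) ^ 2 = 4 by norm_num] using hc
    have := sub_eq_zero.mp (by simpa [map_sub] using this)
    simpa using this
  have h4 : f a ^ 2 + f b ^ 2 + f d ^ 2 = 0 := by
    have := congrArg f h
    simp only [map_add, map_mul, map_pow, map_zero, hfc, one_mul] at this
    exact this
  have key : ∀ u v w : ZMod (2 ^ 2), u ^ 2 + v ^ 2 + w ^ 2 = 0 →
      (ZMod.cast u : ZMod (2 ^ 1)) = 0 ∧ (ZMod.cast v : ZMod (2 ^ 1)) = 0 ∧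
      (ZMod.cast w : ZMod (2 ^ 1)) = 0 := by decide
  obtain ⟨ha, hb, hd⟩ := key _ _ _ h4
  refine ⟨?_, ?_, ?_⟩ <;>
  · rw [(by push_cast; ring : (2 : ℤ_[2]) = ((2:ℕ) : ℤ_[2]) ^ 1), ← Ideal.mem_span_singleton,
      ← PadicInt.ker_toZModPow, RingHom.mem_ker]
    first
    | (rw [← PadicInt.cast_toZModPow 1 2 (by norm_num)]; assumption)

lemma descent (c : ℤ_[2]ˣ) (hc : (4 : ℤ_[2]) ∣ ((c : ℤ_[2]) - 1)) :
    ∀ n : ℕ, ∀ a b d : ℤ_[2],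
      a ^ 2 + (c : ℤ_[2]) * b ^ 2 + (c : ℤ_[2]) * d ^ 2 = 0 →
      ‖a‖ ≤ (2 : ℝ)⁻¹ ^ n ∧ ‖b‖ ≤ (2 : ℝ)⁻¹ ^ n ∧ ‖d‖ ≤ (2 : ℝ)⁻¹ ^ n := by
  intro n
  induction n with
  | zero => intro a b d _; simpa using ⟨a.norm_le_one, b.norm_le_one, d.norm_le_one⟩
  | succ n ih =>
    intro a b d h
    obtain ⟨⟨a', rfl⟩, ⟨b', rfl⟩, ⟨d', rfl⟩⟩ := two_dvd_of_sq c hc a b d h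
    have h4 : (4 : ℤ_[2]) * (a' ^ 2 + (c : ℤ_[2]) * b' ^ 2 + (c : ℤ_[2]) * d' ^ 2) = 0 := by
      rw [← h]; ring
    have h' : a' ^ 2 + (c : ℤ_[2]) * b' ^ 2 + (c : ℤ_[2]) * d' ^ 2 = 0 := by
      rcases mul_eq_zero.mp h4 with h0 | h0
      · exact absurd h0 (by norm_num)
      · exact h0
    obtain ⟨ha, hb, hd⟩ := ih a' b' d' h'
    have hn2 : ‖(2 : ℤ_[2])‖ = (2 : ℝ)⁻¹ := by
      simpa using (@PadicInt.norm_p 2 _)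
    refine ⟨?_, ?_, ?_⟩ <;>
    · rw [norm_mul, hn2, pow_succ, mul_comm ((2:ℝ)⁻¹ ^ n)]
      exact mul_le_mul_of_nonneg_left (by assumption) (by norm_num)

lemma int_case (c : ℤ_[2]ˣ) (hc : (4 : ℤ_[2]) ∣ ((c : ℤ_[2]) - 1))
    (a b d : ℤ_[2]) (h : a ^ 2 + (c : ℤ_[2]) * b ^ 2 + (c : ℤ_[2]) * d ^ 2 = 0) :
    a = 0 ∧ b = 0 ∧ d = 0 := by
  have key : ∀ e : ℤ_[2], (∀ n : ℕ, ‖e‖ ≤ (2 : ℝ)⁻¹ ^ n) → e = 0 := by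
    intro e he
    by_contra h0
    have hpos : 0 < ‖e‖ := norm_pos_iff.mpr h0
    obtain ⟨n, hn⟩ := exists_pow_lt_of_lt_one hpos (by norm_num : (2:ℝ)⁻¹ < 1)
    exact absurd (he n) (not_le.mpr hn)
  exact ⟨key a fun n => (descent c hc n a b d h).1,
         key b fun n => (descent c hc n a b d h).2.1,
         key d fun n => (descent c hc n a b d h).2.2⟩


/-- Let `c` be a unit of `ℤ₂` with `c ≡ 1 (mod 4ℤ₂)`. Then the ternary form
`x² + c·y² + c·z²` is anisotropic over `ℚ₂`: if `x, y, z ∈ ℚ₂` satisfy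
`x² + c·y² + c·z² = 0`, then `x = y = z = 0`. -/
theorem anisotropic_unit_ternary_Q2 (c : ℤ_[2]ˣ) (hc : (4 : ℤ_[2]) ∣ ((c : ℤ_[2]) - 1))
    (x y z : ℚ_[2])
    (h : x ^ 2 + ((c : ℤ_[2]) : ℚ_[2]) * y ^ 2 + ((c : ℤ_[2]) : ℚ_[2]) * z ^ 2 = 0) :
    x = 0 ∧ y = 0 ∧ z = 0 := by
  obtain ⟨k, hk⟩ : ∃ k : ℕ, ‖x‖ ≤ 2 ^ k ∧ ‖y‖ ≤ 2 ^ k ∧ ‖z‖ ≤ 2 ^ k := by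
    obtain ⟨k, hk⟩ := pow_unbounded_of_one_lt (max ‖x‖ (max ‖y‖ ‖z‖)) (by norm_num : (1:ℝ) < 2)
    exact ⟨k, le_of_lt (lt_of_le_of_lt (le_max_left _ _) hk),
      le_of_lt (lt_of_le_of_lt ((le_max_left _ _).trans (le_max_right _ _)) hk),
      le_of_lt (lt_of_le_of_lt ((le_max_right _ _).trans (le_max_right _ _)) hk)⟩
  have hnorm2 : ‖(2 : ℚ_[2]) ^ k‖ = (2:ℝ)⁻¹ ^ k := by
    rw [_root_.norm_pow]
    congr 1
    simpa using (@Padic.norm_p 2 _)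
  have hbound : ∀ w : ℚ_[2], ‖w‖ ≤ 2 ^ k → ‖(2 : ℚ_[2]) ^ k * w‖ ≤ 1 := by
    intro w hw
    rw [_root_.norm_mul, hnorm2]
    calc (2:ℝ)⁻¹ ^ k * ‖w‖ ≤ (2:ℝ)⁻¹ ^ k * 2 ^ k :=
          mul_le_mul_of_nonneg_left hw (by positivity)
      _ = 1 := by rw [← mul_pow]; norm_num
  set a : ℤ_[2] := ⟨(2 : ℚ_[2]) ^ k * x, hbound x hk.1⟩ with ha
  set b : ℤ_[2] := ⟨(2 : ℚ_[2]) ^ k * y, hbound y hk.2.1⟩ with hb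
  set d : ℤ_[2] := ⟨(2 : ℚ_[2]) ^ k * z, hbound z hk.2.2⟩ with hd
  have heq : a ^ 2 + (c : ℤ_[2]) * b ^ 2 + (c : ℤ_[2]) * d ^ 2 = 0 := by
    apply Subtype.ext
    push_cast [ha, hb, hd]
    have : ((2:ℚ_[2]) ^ k * x) ^ 2 + ((c : ℤ_[2]) : ℚ_[2]) * ((2:ℚ_[2]) ^ k * y) ^ 2
        + ((c : ℤ_[2]) : ℚ_[2]) * ((2:ℚ_[2]) ^ k * z) ^ 2
        = ((2:ℚ_[2]) ^ k) ^ 2 * (x ^ 2 + ((c : ℤ_[2]) : ℚ_[2]) * y ^ 2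
            + ((c : ℤ_[2]) : ℚ_[2]) * z ^ 2) := by ring
    exact this.trans (by rw [h, mul_zero])
  obtain ⟨ha0, hb0, hd0⟩ := int_case c hc a b d heq
  have h2k : (2 : ℚ_[2]) ^ k ≠ 0 := pow_ne_zero _ two_ne_zero
  have e1 : (2 : ℚ_[2]) ^ k * x = 0 := congrArg Subtype.val ha0
  have e2 : (2 : ℚ_[2]) ^ k * y = 0 := congrArg Subtype.val hb0
  have e3 : (2 : ℚ_[2]) ^ k * z = 0 := congrArg Subtype.val hd0
  exact ⟨by simpa [h2k] using mul_eq_zero.mp e1,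
         by simpa [h2k] using mul_eq_zero.mp e2,
         by simpa [h2k] using mul_eq_zero.mp e3⟩
end

section
/- The set of values of the binary quadratic form 2x² + 2xy + 2y² on the ring ℤ₂ of 2-adic integers is {2x² + 2xy + 2y² : x, y ∈ ℤ₂} = {t ∈ ℤ₂ : ord₂(t) is odd} ∪ {0}, where ord₂(t) denotes the 2-adic valuation of a nonzero t ∈ ℤ₂. -/
open Polynomial

lemma two_dvd_iff' (x : ℤ_[2]) : (2 : ℤ_[2]) ∣ x ↔ PadicInt.toZMod x = 0 := by
  have h : PadicInt.toZMod x = 0 ↔ x ∈ RingHom.ker (PadicInt.toZMod (p := 2)) := Iff.rfl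
  rw [h, PadicInt.ker_toZMod, PadicInt.maximalIdeal_eq_span_p, Ideal.mem_span_singleton,
    Nat.cast_ofNat]

lemma isUnit_form' {a b : ℤ_[2]} (ha : ¬ (2:ℤ_[2]) ∣ a) : IsUnit (a^2 + a*b + b^2) := by
  rw [PadicInt.isUnit_iff]
  rcases (PadicInt.norm_le_one (a^2 + a*b + b^2)).lt_or_eq with h | h
  · exfalso
    rw [PadicInt.norm_lt_one_iff_dvd, Nat.cast_ofNat, two_dvd_iff'] at h
    rw [two_dvd_iff'] at ha
    have key : ∀ A B : ZMod 2, A ≠ 0 → A^2 + A*B + B^2 ≠ 0 := by decide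
    exact key _ _ ha (by simpa using h)
  · exact h

lemma val_unit' {w : ℤ_[2]} (hw : IsUnit w) : w.valuation = 0 := by
  have h0 : w ≠ 0 := hw.ne_zero
  have h := PadicInt.norm_eq_zpow_neg_valuation h0
  rw [PadicInt.isUnit_iff.mp hw] at h
  have h2 : ((2:ℕ):ℝ) ^ (0:ℤ) = ((2:ℕ):ℝ) ^ (-(w.valuation:ℤ)) := by simpa using h
  have := zpow_right_injective₀ (by norm_num) (by norm_num) h2
  omega

lemma form_decomp' {x y : ℤ_[2]} (hx : x ≠ 0) (hxy : ‖y‖ ≤ ‖x‖) :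
    ∃ (n : ℕ) (w : ℤ_[2]), IsUnit w ∧ x^2 + x*y + y^2 = 2^(2*n) * w := by
  set n := x.valuation with hn
  have hval : (n : ℤ) = (x.valuation : ℤ) := rfl
  have hdvd : (2:ℤ_[2])^n ∣ y := by
    rcases eq_or_ne y 0 with rfl | hy
    · exact dvd_zero _
    · have h1 : ‖y‖ ≤ ((2:ℕ):ℝ) ^ (-(n:ℤ)) := by
        rw [PadicInt.norm_eq_zpow_neg_valuation hx] at hxy
        rwa [← hval] at hxy
      rw [PadicInt.norm_le_pow_iff_mem_span_pow, Ideal.mem_span_singleton] at h1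
      simpa using h1
  obtain ⟨c, hc⟩ := hdvd
  have hspec := PadicInt.unitCoeff_spec hx
  rw [Nat.cast_ofNat] at hspec
  set u := PadicInt.unitCoeff hx with hu
  have hund : ¬ (2:ℤ_[2]) ∣ (u:ℤ_[2]) := by
    intro hd
    have := (PadicInt.norm_lt_one_iff_dvd (u:ℤ_[2])).mpr (by exact_mod_cast hd)
    rw [PadicInt.norm_units] at this
    exact lt_irrefl _ this
  refine ⟨n, (u:ℤ_[2])^2 + (u:ℤ_[2])*c + c^2, isUnit_form' hund, ?_⟩
  rw [hspec, hc]; ring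

lemma forward' (x y : ℤ_[2]) (hle : ‖y‖ ≤ ‖x‖) (h0 : 2*x^2 + 2*x*y + 2*y^2 ≠ 0) :
    Odd (2*x^2 + 2*x*y + 2*y^2).valuation := by
  have hx : x ≠ 0 := by
    rintro rfl
    have : y = 0 := by simpa using hle
    subst this; simp at h0
  obtain ⟨n, w, hw, hform⟩ := form_decomp' hx hle
  have ht2 : 2*x^2 + 2*x*y + 2*y^2 = ((2:ℕ):ℤ_[2])^(2*n+1) * w := by
    have h : 2*x^2 + 2*x*y + 2*y^2 = 2*(x^2 + x*y + y^2) := by ring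
    rw [h, hform, Nat.cast_ofNat]; ring
  rw [ht2, PadicInt.valuation_p_pow_mul _ _ hw.ne_zero, val_unit' hw]
  exact ⟨n, by push_cast; ring⟩

lemma unit_rep' {u : ℤ_[2]} (hu : ‖u‖ = 1) : ∃ a : ℤ_[2], a^2 + a + 1 = u := by
  have hd : (2:ℤ_[2]) ∣ (1 - u) := by
    rw [two_dvd_iff', map_sub, map_one]
    have h1 : PadicInt.toZMod u ≠ 0 := by
      intro h
      have hd2 := (two_dvd_iff' u).mpr h
      have := (PadicInt.norm_lt_one_iff_dvd u).mpr (by exact_mod_cast hd2)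
      rw [hu] at this; exact lt_irrefl _ this
    have key : ∀ A : ZMod 2, A ≠ 0 → 1 - A = 0 := by decide
    exact key _ h1
  have h1u : ‖(1:ℤ_[2]) - u‖ < 1 :=
    (PadicInt.norm_lt_one_iff_dvd _).mpr (by exact_mod_cast hd)
  have hnorm : ‖(X^2 + X + C (1-u) : Polynomial ℤ_[2]).eval 0‖ <
      ‖(Polynomial.derivative (X^2 + X + C (1-u) : Polynomial ℤ_[2])).eval 0‖ ^ 2 := by
    simpa using h1u
  obtain ⟨z, hz, -⟩ := hensels_lemma hnorm
  simp only [map_add, map_pow, aeval_X, aeval_C, Algebra.algebraMap_self, RingHom.id_apply] at hz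
  exact ⟨z, by linear_combination hz⟩

/-- The set of values of `2x² + 2xy + 2y²` on `ℤ₂` equals the set of 2-adic integers of
odd 2-adic valuation together with `0`. -/
theorem values_binary_form_Z2 :
    {t : ℤ_[2] | ∃ x y : ℤ_[2], t = 2 * x ^ 2 + 2 * x * y + 2 * y ^ 2} =
      {t : ℤ_[2] | t ≠ 0 ∧ Odd t.valuation} ∪ {0} := by
  ext t
  simp only [Set.mem_setOf_eq, Set.mem_union, Set.mem_singleton_iff]
  constructor
  · rintro ⟨x, y, rfl⟩
    rcases eq_or_ne (2*x^2 + 2*x*y + 2*y^2) 0 with h0 | h0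
    · right; exact h0
    · left
      refine ⟨h0, ?_⟩
      rcases le_total ‖y‖ ‖x‖ with hle | hle
      · exact forward' x y hle h0
      · have he : 2*x^2 + 2*x*y + 2*y^2 = 2*y^2 + 2*y*x + 2*x^2 := by ring
        rw [he] at h0 ⊢
        exact forward' y x hle h0
  · rintro (⟨h0, hodd⟩ | rfl)
    · obtain ⟨k, hk⟩ := hodd
      have hnn := Nat.zero_le t.valuation
      have hknn : 0 ≤ k := by omega
      set m := k with hm
      have habs : t.valuation = 2*m + 1 := by omega
      have hspec := PadicInt.unitCoeff_spec h0
      rw [Nat.cast_ofNat, habs] at hspec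
      obtain ⟨a, ha⟩ := unit_rep' (PadicInt.norm_units (PadicInt.unitCoeff h0))
      refine ⟨2^m * a, 2^m, ?_⟩
      rw [hspec, ← ha]; ring
    · exact ⟨0, 0, by ring⟩
end

section
/- Let p be a prime with p ≡ 1 (mod 4), let r be a positive integer, and let η be a unit of the ring ℤ_p of p-adic integers. Then {x² + pʳη·y² + pʳη·z² : x, y, z ∈ ℤ_p} = {x² + pʳ·y : x, y ∈ ℤ_p}. -/
open PadicInt

lemma exists_sqrt_neg_one (p : ℕ) [hpp : Fact p.Prime] (hp : p % 4 = 1) :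
    ∃ i : ℤ_[p], i ^ 2 = -1 := by
  have hp3 : p % 4 ≠ 3 := by omega
  obtain ⟨b₀, hb₀⟩ := (ZMod.exists_sq_eq_neg_one_iff (p := p)).2 hp3
  set a : ℤ_[p] := (b₀.val : ℤ_[p]) with ha
  have hta : PadicInt.toZMod a = b₀ := by
    simp [a, PadicInt.toZMod, ZMod.natCast_val]
  have hb0 : b₀ ≠ 0 := by
    intro h
    rw [h] at hb₀
    simp at hb₀
  have haunit : IsUnit a := by
    by_contra h
    rw [PadicInt.not_isUnit_iff, PadicInt.norm_lt_one_iff_dvd,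
      ← Ideal.mem_span_singleton, ← PadicInt.maximalIdeal_eq_span_p,
      ← PadicInt.ker_toZMod, RingHom.mem_ker, hta] at h
    exact hb0 h
  have hodd : p ≠ 2 := by omega
  have h2 : IsUnit (2 : ℤ_[p]) := by
    by_contra h
    rw [PadicInt.not_isUnit_iff] at h
    have : ‖((2 : ℤ) : ℤ_[p])‖ < 1 := by exact_mod_cast h
    rw [PadicInt.norm_int_lt_one_iff_dvd] at this
    have hdvd : p ∣ 2 := by exact_mod_cast this
    have := (Nat.prime_dvd_prime_iff_eq hpp.out Nat.prime_two).mp hdvd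
    omega
  -- apply Hensel's lemma to F = X^2 + 1
  set F : Polynomial ℤ_[p] := Polynomial.X ^ 2 + 1 with hF
  have hFa : F.eval a = a ^ 2 + 1 := by simp [hF]
  have hF' : F.derivative.eval a = 2 * a := by
    simp [hF, Polynomial.derivative_pow]
  have hnorm' : ‖F.derivative.eval a‖ = 1 := by
    rw [hF', norm_mul, PadicInt.isUnit_iff.mp h2, PadicInt.isUnit_iff.mp haunit]
    norm_num
  have hFaZ : PadicInt.toZMod (F.eval a) = 0 := by
    rw [hFa, map_add, map_pow, hta, map_one, sq, ← hb₀]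
    ring
  have hFnorm : ‖F.eval a‖ < 1 := by
    rw [PadicInt.norm_lt_one_iff_dvd, ← Ideal.mem_span_singleton,
      ← PadicInt.maximalIdeal_eq_span_p, ← PadicInt.ker_toZMod, RingHom.mem_ker]
    exact hFaZ
  have hyp : ‖F.eval a‖ < ‖F.derivative.eval a‖ ^ 2 := by
    rw [hnorm']; simpa using hFnorm
  obtain ⟨z, hz, -⟩ := hensels_lemma hyp
  refine ⟨z, ?_⟩
  have : z ^ 2 + 1 = 0 := by simpa [hF] using hz
  linear_combination this

/-- Let `p` be a prime with `p ≡ 1 (mod 4)`, `r` a positive integer, and `η` a unit of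
`ℤ_p`. Then `{x² + pʳη·y² + pʳη·z² : x, y, z ∈ ℤ_p} = {x² + pʳ·y : x, y ∈ ℤ_p}`. -/
theorem values_ternary_form_Zp (p : ℕ) [Fact p.Prime] (hp : p % 4 = 1)
    (r : ℕ) (hr : 0 < r) (η : ℤ_[p]ˣ) :
    {t : ℤ_[p] | ∃ x y z : ℤ_[p],
        t = x ^ 2 + (p : ℤ_[p]) ^ r * (η : ℤ_[p]) * y ^ 2 +
          (p : ℤ_[p]) ^ r * (η : ℤ_[p]) * z ^ 2} =
      {t : ℤ_[p] | ∃ x y : ℤ_[p], t = x ^ 2 + (p : ℤ_[p]) ^ r * y} := by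
  obtain ⟨i, hi⟩ := exists_sqrt_neg_one p hp
  have h2 : IsUnit (2 : ℤ_[p]) := by
    by_contra h
    rw [PadicInt.not_isUnit_iff] at h
    have : ‖((2 : ℤ) : ℤ_[p])‖ < 1 := by exact_mod_cast h
    rw [PadicInt.norm_int_lt_one_iff_dvd] at this
    have hdvd : p ∣ 2 := by exact_mod_cast this
    have := (Nat.prime_dvd_prime_iff_eq (Fact.out (p := p.Prime)) Nat.prime_two).mp hdvd
    omega
  obtain ⟨t2, ht2⟩ := h2
  ext t
  simp only [Set.mem_setOf_eq]
  constructor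
  · rintro ⟨x, y, z, rfl⟩
    exact ⟨x, (η : ℤ_[p]) * y ^ 2 + (η : ℤ_[p]) * z ^ 2, by ring⟩
  · rintro ⟨x, y, rfl⟩
    set w : ℤ_[p] := ((η⁻¹ : ℤ_[p]ˣ) : ℤ_[p]) * y with hw
    refine ⟨x, (w + 1) * ((t2⁻¹ : ℤ_[p]ˣ) : ℤ_[p]), i * ((w - 1) * ((t2⁻¹ : ℤ_[p]ˣ) : ℤ_[p])), ?_⟩
    have hinv2 : (2 : ℤ_[p]) * ((t2⁻¹ : ℤ_[p]ˣ) : ℤ_[p]) = 1 := by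
      rw [← ht2, Units.mul_inv]
    have hsum : ((w + 1) * ((t2⁻¹ : ℤ_[p]ˣ) : ℤ_[p])) ^ 2 +
        (i * ((w - 1) * ((t2⁻¹ : ℤ_[p]ˣ) : ℤ_[p]))) ^ 2 = w := by
      have : ((w + 1) * ((t2⁻¹ : ℤ_[p]ˣ) : ℤ_[p])) ^ 2 +
          (i * ((w - 1) * ((t2⁻¹ : ℤ_[p]ˣ) : ℤ_[p]))) ^ 2 =
          w * ((2 : ℤ_[p]) * ((t2⁻¹ : ℤ_[p]ˣ) : ℤ_[p])) ^ 2 +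
          (i ^ 2 + 1) * ((w - 1) * ((t2⁻¹ : ℤ_[p]ˣ) : ℤ_[p])) ^ 2 := by ring
      rw [this, hinv2, hi]
      ring
    have hηw : (η : ℤ_[p]) * w = y := by
      rw [hw, ← mul_assoc, Units.mul_inv, one_mul]
    have key : (η : ℤ_[p]) * (((w + 1) * ((t2⁻¹ : ℤ_[p]ˣ) : ℤ_[p])) ^ 2 +
        (i * ((w - 1) * ((t2⁻¹ : ℤ_[p]ˣ) : ℤ_[p]))) ^ 2) = y := by rw [hsum, hηw]
    calc x ^ 2 + (p : ℤ_[p]) ^ r * y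
        = x ^ 2 + (p : ℤ_[p]) ^ r * ((η : ℤ_[p]) * (((w + 1) * ((t2⁻¹ : ℤ_[p]ˣ) : ℤ_[p])) ^ 2 +
          (i * ((w - 1) * ((t2⁻¹ : ℤ_[p]ˣ) : ℤ_[p]))) ^ 2)) := by rw [key]
      _ = _ := by ring
end

section
/- Let μ be a unit of the ring ℤ₂ of 2-adic integers with μ ≡ 1 (mod 4ℤ₂). Then {x² + 2μ·y² + 2μ·z² : x, y, z ∈ ℤ₂} = {x² + 2y² + 2z² : x, y, z ∈ ℤ₂}. -/
open Polynomial

lemma sq_of_one_mod_eight (w : ℤ_[2]) (hw : (8 : ℤ_[2]) ∣ (w - 1)) :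
    ∃ r : ℤ_[2], r ^ 2 = w := by
  have h2 : ‖(2 : ℤ_[2])‖ = 2⁻¹ := by
    simpa using PadicInt.norm_p (p := 2)
  set F : Polynomial ℤ_[2] := X ^ 2 - C w with hF
  have hder : F.derivative = C 2 * X := by
    simp [hF]
    rw [one_add_one_eq_two, map_ofNat]
  have heval : F.eval 1 = 1 - w := by simp [hF]
  have hdeval : F.derivative.eval 1 = 2 := by simp [hder]
  have hnorm : ‖F.eval 1‖ < ‖F.derivative.eval 1‖ ^ 2 := by
    rw [heval, hdeval, h2]
    obtain ⟨c, hc⟩ := hw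
    have h8 : (8 : ℤ_[2]) = 2 ^ 3 := by norm_num
    have : ‖1 - w‖ ≤ 8⁻¹ := by
      have : (1 : ℤ_[2]) - w = -(8 * c) := by rw [← hc]; ring
      rw [this, norm_neg, norm_mul, h8, norm_pow, h2]
      calc (2⁻¹ : ℝ) ^ 3 * ‖c‖ ≤ 2⁻¹ ^ 3 * 1 := by
            gcongr; exact PadicInt.norm_le_one c
        _ = 8⁻¹ := by norm_num
    calc ‖1 - w‖ ≤ 8⁻¹ := this
      _ < (2⁻¹ : ℝ) ^ 2 := by norm_num
  obtain ⟨z, hz, _⟩ := hensels_lemma hnorm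
  refine ⟨z, ?_⟩
  have : z ^ 2 - w = 0 := by simpa [hF] using hz
  exact sub_eq_zero.mp this

lemma two_dvd_or (k : ℤ_[2]) : (2 : ℤ_[2]) ∣ k ∨ (2 : ℤ_[2]) ∣ (k - 1) := by
  have h : ∀ m : ℤ_[2], PadicInt.toZMod m = 0 → (2 : ℤ_[2]) ∣ m := by
    intro m hm
    have hmem : m ∈ RingHom.ker (PadicInt.toZMod : ℤ_[2] →+* ZMod 2) := hm
    rw [PadicInt.ker_toZMod, PadicInt.maximalIdeal_eq_span_p,
      Ideal.mem_span_singleton] at hmem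
    exact_mod_cast hmem
  rcases (by decide : ∀ c : ZMod 2, c = 0 ∨ c = 1) (PadicInt.toZMod k) with h0 | h1
  · exact Or.inl (h k h0)
  · refine Or.inr (h (k - 1) ?_)
    rw [map_sub, map_one, h1, sub_self]

lemma sum_two_sq (u : ℤ_[2]) (hu : (4 : ℤ_[2]) ∣ (u - 1)) :
    ∃ a b : ℤ_[2], u = a ^ 2 + b ^ 2 := by
  obtain ⟨k, hk⟩ := hu
  rcases two_dvd_or k with hk2 | hk2
  · obtain ⟨m, hm⟩ := hk2
    have : (8 : ℤ_[2]) ∣ (u - 1) := ⟨m, by rw [hk, hm]; ring⟩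
    obtain ⟨r, hr⟩ := sq_of_one_mod_eight u this
    exact ⟨r, 0, by rw [← hr]; ring⟩
  · obtain ⟨v, hv⟩ := hk2
    have h8 : (8 : ℤ_[2]) ∣ ((u - 4) - 1) := by
      refine ⟨v, ?_⟩
      calc u - 4 - 1 = 4 * k - 4 := by rw [← hk]; ring
        _ = 4 * (k - 1) := by ring
        _ = 4 * (2 * v) := by rw [hv]
        _ = 8 * v := by ring
    obtain ⟨r, hr⟩ := sq_of_one_mod_eight (u - 4) h8
    exact ⟨r, 2, by linear_combination -hr⟩

/-- Let `μ` be a unit of `ℤ₂` with `μ ≡ 1 (mod 4ℤ₂)`. Then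
`{x² + 2μ·y² + 2μ·z² : x, y, z ∈ ℤ₂} = {x² + 2y² + 2z² : x, y, z ∈ ℤ₂}`. -/
theorem values_ternary_form_Z2 (μ : ℤ_[2]ˣ) (hμ : (4 : ℤ_[2]) ∣ ((μ : ℤ_[2]) - 1)) :
    {t : ℤ_[2] | ∃ x y z : ℤ_[2],
        t = x ^ 2 + 2 * (μ : ℤ_[2]) * y ^ 2 + 2 * (μ : ℤ_[2]) * z ^ 2} =
      {t : ℤ_[2] | ∃ x y z : ℤ_[2], t = x ^ 2 + 2 * y ^ 2 + 2 * z ^ 2} := by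
  obtain ⟨a, b, hab⟩ := sum_two_sq (μ : ℤ_[2]) hμ
  have hμinv : (4 : ℤ_[2]) ∣ ((↑μ⁻¹ : ℤ_[2]) - 1) := by
    obtain ⟨c, hc⟩ := hμ
    refine ⟨-(↑μ⁻¹ * c), ?_⟩
    have h1 : (↑μ⁻¹ : ℤ_[2]) * ↑μ = 1 := by
      norm_cast; exact_mod_cast μ.inv_mul
    calc (↑μ⁻¹ : ℤ_[2]) - 1 = ↑μ⁻¹ * (1 - ↑μ) + (↑μ⁻¹ * ↑μ - 1) := by ring
      _ = ↑μ⁻¹ * (-(4 * c)) + 0 := by rw [h1]; rw [show (1:ℤ_[2]) - ↑μ = -(4*c) by rw [← hc]; ring]; ring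
      _ = 4 * -(↑μ⁻¹ * c) := by ring
  obtain ⟨a', b', hab'⟩ := sum_two_sq (↑μ⁻¹ : ℤ_[2]) hμinv
  have h1 : (↑μ : ℤ_[2]) * ↑μ⁻¹ = 1 := by norm_cast; exact_mod_cast μ.mul_inv
  ext t
  simp only [Set.mem_setOf_eq]
  constructor
  · rintro ⟨x, y, z, rfl⟩
    exact ⟨x, a * y - b * z, a * z + b * y, by rw [hab]; ring⟩
  · rintro ⟨x, y, z, rfl⟩
    refine ⟨x, a' * y - b' * z, a' * z + b' * y, ?_⟩
    have : (↑μ : ℤ_[2]) * ((a' * y - b' * z) ^ 2 + (a' * z + b' * y) ^ 2)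
        = ↑μ * ↑μ⁻¹ * (y ^ 2 + z ^ 2) := by rw [hab']; ring
    rw [h1, one_mul] at this
    linear_combination (-2) * this
end

section
/- Let a and b be positive integers with gcd(a,b) = 1 such that a² + b² = pʳ for some prime p ≡ 1 (mod 4) and positive integer r, or a² + b² = 2pᵏ for some prime p ≡ 1 (mod 4) and non-negative integer k. Then the ternary quadratic form x² + (a² + b²)y² + (a² + b²)z² is anisotropic over ℚ₂ (its only nontrivial zero over ℚ₂ is x = y = z = 0 only), while for every odd prime q it is isotropic over ℚ_q, i.e., there exist x, y, z ∈ ℚ_q, not all zero, with x² + (a² + b²)y² + (a² + b²)z² = 0. -/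
set_option maxHeartbeats 1000000 in
private lemma zmod16_aniso : ∀ m s t w : ZMod (2^4),
    (m = 1 ∨ m = 5 ∨ m = 9 ∨ m = 13 ∨ m = 2 ∨ m = 10) →
    (s.val % 2 = 1 ∨ t.val % 2 = 1 ∨ w.val % 2 = 1) → s^2 + m*t^2 + m*w^2 ≠ 0 := by decide

private lemma unit_val_odd (s : ZMod (2^4)) (hs : IsUnit s) : s.val % 2 = 1 := by
  obtain ⟨u, rfl⟩ := hs
  have hcop := ZMod.val_coe_unit_coprime u
  have h2 : ¬ (2 ∣ ((u : ZMod (2^4)).val)) := by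
    intro h
    have : 2 ∣ Nat.gcd ((u : ZMod (2^4)).val) (2^4) := Nat.dvd_gcd h (by norm_num)
    rw [hcop] at this
    omega
  omega

/-- The key anisotropy lemma at 2. -/
private lemma aniso_two (m : ℕ)
    (hm : m % 16 = 1 ∨ m % 16 = 5 ∨ m % 16 = 9 ∨ m % 16 = 13 ∨ m % 16 = 2 ∨ m % 16 = 10) :
    ∀ x y z : ℚ_[2], x ^ 2 + (m : ℚ_[2]) * y ^ 2 + (m : ℚ_[2]) * z ^ 2 = 0 →
      x = 0 ∧ y = 0 ∧ z = 0 := by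
  intro x y z hE
  by_contra hcon
  have hnz : x ≠ 0 ∨ y ≠ 0 ∨ z ≠ 0 := by tauto
  -- pick the element of maximal norm
  obtain ⟨w, hwor, hwx, hwy, hwz⟩ : ∃ w : ℚ_[2], (w = x ∨ w = y ∨ w = z) ∧
      ‖x‖ ≤ ‖w‖ ∧ ‖y‖ ≤ ‖w‖ ∧ ‖z‖ ≤ ‖w‖ := by
    rcases le_total ‖x‖ ‖y‖ with h1 | h1
    · rcases le_total ‖y‖ ‖z‖ with h2 | h2
      · exact ⟨z, Or.inr (Or.inr rfl), h1.trans h2, h2, le_refl _⟩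
      · exact ⟨y, Or.inr (Or.inl rfl), h1, le_refl _, h2⟩
    · rcases le_total ‖x‖ ‖z‖ with h2 | h2
      · exact ⟨z, Or.inr (Or.inr rfl), h2, h1.trans h2, le_refl _⟩
      · exact ⟨x, Or.inl rfl, le_refl _, h1, h2⟩
  have hw0 : w ≠ 0 := by
    intro h0
    rw [h0, norm_zero] at hwx hwy hwz
    rcases hnz with h | h | h <;>
      [exact h (norm_le_zero_iff.1 hwx); exact h (norm_le_zero_iff.1 hwy);
        exact h (norm_le_zero_iff.1 hwz)]
  have hnw : 0 < ‖w‖ := norm_pos_iff.2 hw0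
  have bound : ∀ u : ℚ_[2], ‖u‖ ≤ ‖w‖ → ‖w⁻¹ * u‖ ≤ 1 := by
    intro u hu
    rw [norm_mul, norm_inv]
    calc ‖w‖⁻¹ * ‖u‖ ≤ ‖w‖⁻¹ * ‖w‖ := by gcongr
      _ = 1 := inv_mul_cancel₀ (ne_of_gt hnw)
  set X : ℤ_[2] := ⟨w⁻¹ * x, bound x hwx⟩ with hX
  set Y : ℤ_[2] := ⟨w⁻¹ * y, bound y hwy⟩ with hY
  set Z : ℤ_[2] := ⟨w⁻¹ * z, bound z hwz⟩ with hZ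
  have hE2 : X ^ 2 + (m : ℤ_[2]) * Y ^ 2 + (m : ℤ_[2]) * Z ^ 2 = 0 := by
    have hc : ((X ^ 2 + (m : ℤ_[2]) * Y ^ 2 + (m : ℤ_[2]) * Z ^ 2 : ℤ_[2]) : ℚ_[2])
        = (w⁻¹) ^ 2 * (x ^ 2 + (m : ℚ_[2]) * y ^ 2 + (m : ℚ_[2]) * z ^ 2) := by
      push_cast
      show (w⁻¹ * x) ^ 2 + (m : ℚ_[2]) * (w⁻¹ * y) ^ 2 + (m : ℚ_[2]) * (w⁻¹ * z) ^ 2 = _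
      ring
    rw [hE, mul_zero] at hc
    exact PadicInt.coe_eq_zero.1 hc
  have hunit : IsUnit X ∨ IsUnit Y ∨ IsUnit Z := by
    rcases hwor with h | h | h
    · refine Or.inl (PadicInt.isUnit_iff.2 ?_)
      rw [PadicInt.norm_def]
      show ‖w⁻¹ * x‖ = 1
      rw [← h, inv_mul_cancel₀ hw0, norm_one]
    · refine Or.inr (Or.inl (PadicInt.isUnit_iff.2 ?_))
      rw [PadicInt.norm_def]
      show ‖w⁻¹ * y‖ = 1
      rw [← h, inv_mul_cancel₀ hw0, norm_one]
    · refine Or.inr (Or.inr (PadicInt.isUnit_iff.2 ?_))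
      rw [PadicInt.norm_def]
      show ‖w⁻¹ * z‖ = 1
      rw [← h, inv_mul_cancel₀ hw0, norm_one]
  -- map to ZMod 16
  let φ : ℤ_[2] →+* ZMod (2 ^ 4) := PadicInt.toZModPow 4
  have hE3 : (φ X) ^ 2 + (m : ZMod (2 ^ 4)) * (φ Y) ^ 2 + (m : ZMod (2 ^ 4)) * (φ Z) ^ 2 = 0 := by
    have := congrArg φ hE2
    simpa [map_add, map_mul, map_pow, map_natCast] using this
  have hmem : (m : ZMod (2 ^ 4)) = 1 ∨ (m : ZMod (2 ^ 4)) = 5 ∨ (m : ZMod (2 ^ 4)) = 9 ∨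
      (m : ZMod (2 ^ 4)) = 13 ∨ (m : ZMod (2 ^ 4)) = 2 ∨ (m : ZMod (2 ^ 4)) = 10 := by
    have hcast : (m : ZMod (2 ^ 4)) = ((m % 16 : ℕ) : ZMod (2 ^ 4)) := by
      have e : m % 2 ^ 4 = m % 16 := by norm_num
      rw [← e, ZMod.natCast_mod]
    rcases hm with h | h | h | h | h | h <;> rw [hcast, h] <;> simp
  have hodd : (φ X).val % 2 = 1 ∨ (φ Y).val % 2 = 1 ∨ (φ Z).val % 2 = 1 := by
    rcases hunit with h | h | h
    · exact Or.inl (unit_val_odd _ (h.map φ))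
    · exact Or.inr (Or.inl (unit_val_odd _ (h.map φ)))
    · exact Or.inr (Or.inr (unit_val_odd _ (h.map φ)))
  exact zmod16_aniso (m : ZMod (2 ^ 4)) (φ X) (φ Y) (φ Z) hmem hodd hE3

/-- `-1` is a sum of two squares in `ℚ_q` for odd primes `q`. -/
private lemma neg_one_sum_two_squares (q : ℕ) [hq : Fact q.Prime] (hodd : Odd q) :
    ∃ c d : ℚ_[q], c ^ 2 + d ^ 2 = -1 := by
  obtain ⟨c0, d0, h⟩ := ZMod.sq_add_sq q (-1 : ZMod q)
  have hne : c0 ≠ 0 ∨ d0 ≠ 0 := by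
    by_contra hc
    push_neg at hc
    rw [hc.1, hc.2] at h
    have h1 : (1 : ZMod q) = 0 := by linear_combination h
    exact one_ne_zero h1
  -- reduce to the case c0 ≠ 0 by symmetry
  have main : ∀ c0 d0 : ZMod q, c0 ^ 2 + d0 ^ 2 = -1 → c0 ≠ 0 →
      ∃ c d : ℚ_[q], c ^ 2 + d ^ 2 = -1 := by
    intro c0 d0 h hc0
    set A : ℤ_[q] := (c0.val : ℤ_[q]) with hA
    set D : ℤ_[q] := (d0.val : ℤ_[q]) with hD
    set F : Polynomial ℤ_[q] := Polynomial.X ^ 2 + Polynomial.C (1 + D ^ 2) with hF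
    have heval : ∀ u : ℤ_[q], F.eval u = u ^ 2 + (1 + D ^ 2) := by
      intro u; simp [hF]
    have hderiv : F.derivative.eval A = 2 * A := by
      have : F.derivative = Polynomial.C 2 * Polynomial.X := by
        rw [hF, Polynomial.derivative_add, Polynomial.derivative_C,
          Polynomial.derivative_X_pow, add_zero, pow_one]
        norm_num
      rw [this, Polynomial.eval_mul, Polynomial.eval_C, Polynomial.eval_X]
    have htz : ∀ x : ℤ_[q], ‖x‖ < 1 ↔ PadicInt.toZMod x = 0 := by
      intro x
      rw [← PadicInt.mem_nonunits, ← IsLocalRing.mem_maximalIdeal, ← PadicInt.ker_toZMod,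
        RingHom.mem_ker]
    have hAz : PadicInt.toZMod A = c0 := by
      rw [hA, map_natCast, ZMod.natCast_val, ZMod.cast_id]
    have hDz : PadicInt.toZMod D = d0 := by
      rw [hD, map_natCast, ZMod.natCast_val, ZMod.cast_id]
    have hevnorm : ‖F.eval A‖ < 1 := by
      rw [htz, heval]
      rw [map_add, map_add, map_pow, map_pow, map_one, hAz, hDz]
      linear_combination h
    have h2 : (2 : ZMod q) ≠ 0 := by
      intro h2
      have hdvd : q ∣ 2 := (ZMod.natCast_eq_zero_iff 2 q).1 (by exact_mod_cast h2)
      have hq2 : q = 2 := (Nat.prime_dvd_prime_iff_eq hq.out Nat.prime_two).1 hdvd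
      rw [hq2] at hodd
      simp [Nat.odd_iff] at hodd
    have hdnorm : ‖F.derivative.eval A‖ = 1 := by
      rw [hderiv]
      refine le_antisymm (PadicInt.norm_le_one _) (not_lt.1 ?_)
      intro hlt
      rw [htz] at hlt
      rw [map_mul, hAz, map_ofNat] at hlt
      exact mul_ne_zero h2 hc0 hlt
    have hnorm : ‖F.eval A‖ < ‖F.derivative.eval A‖ ^ 2 := by
      rw [hdnorm]; simpa using hevnorm
    obtain ⟨zr, hzr, -, -, -⟩ := hensels_lemma hnorm
    rw [Polynomial.coe_aeval_eq_eval, heval] at hzr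
    refine ⟨(zr : ℚ_[q]), (D : ℚ_[q]), ?_⟩
    have := congrArg (fun t : ℤ_[q] => (t : ℚ_[q])) hzr
    push_cast at this
    linear_combination this
  rcases hne with hc | hd
  · exact main c0 d0 h hc
  · exact main d0 c0 (by linear_combination h) hd

/-- Let `a, b` be coprime positive integers with `a² + b² = pʳ` for a prime `p ≡ 1 (mod 4)`
and positive integer `r`, or `a² + b² = 2pᵏ` for a prime `p ≡ 1 (mod 4)` and non-negative
integer `k`. Then the form `x² + (a² + b²)y² + (a² + b²)z²` is anisotropic over `ℚ₂`,
while for every odd prime `q` it is isotropic over `ℚ_q`. -/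
theorem anisotropic_at_two_isotropic_at_odd (a b : ℕ) (ha : 0 < a) (hb : 0 < b)
    (hab : Nat.gcd a b = 1)
    (hform : (∃ p r : ℕ, p.Prime ∧ p % 4 = 1 ∧ 0 < r ∧ a ^ 2 + b ^ 2 = p ^ r) ∨
      (∃ p k : ℕ, p.Prime ∧ p % 4 = 1 ∧ a ^ 2 + b ^ 2 = 2 * p ^ k)) :
    (∀ x y z : ℚ_[2],
        x ^ 2 + ((a ^ 2 + b ^ 2 : ℕ) : ℚ_[2]) * y ^ 2 +
          ((a ^ 2 + b ^ 2 : ℕ) : ℚ_[2]) * z ^ 2 = 0 → x = 0 ∧ y = 0 ∧ z = 0) ∧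
    (∀ (q : ℕ) [Fact q.Prime], Odd q →
      ∃ x y z : ℚ_[q], ¬(x = 0 ∧ y = 0 ∧ z = 0) ∧
        x ^ 2 + ((a ^ 2 + b ^ 2 : ℕ) : ℚ_[q]) * y ^ 2 +
          ((a ^ 2 + b ^ 2 : ℕ) : ℚ_[q]) * z ^ 2 = 0) := by
  set m : ℕ := a ^ 2 + b ^ 2 with hmdef
  constructor
  · -- anisotropic at 2
    have hm : m % 16 = 1 ∨ m % 16 = 5 ∨ m % 16 = 9 ∨ m % 16 = 13 ∨ m % 16 = 2 ∨ m % 16 = 10 := by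
      rcases hform with ⟨p, r, hp, hp4, hr, hpr⟩ | ⟨p, k, hp, hp4, hpk⟩
      · have h4 : p ^ r % 4 = 1 := by simp [Nat.pow_mod, hp4]
        have hm4 : m % 4 = 1 := by rw [hpr]; exact h4
        omega
      · have h4 : p ^ k % 4 = 1 := by simp [Nat.pow_mod, hp4]
        set u := p ^ k with hu
        omega
    exact aniso_two m hm
  · -- isotropic at odd primes
    intro q _ hqodd
    obtain ⟨c, d, hcd⟩ := neg_one_sum_two_squares q hqodd
    refine ⟨((m : ℕ) : ℚ_[q]), c * a - d * b, c * b + d * a, ?_, ?_⟩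
    · intro hcon
      have hm0 : 0 < m := by rw [hmdef]; positivity
      have : ((m : ℕ) : ℚ_[q]) ≠ 0 := by
        rw [Nat.cast_ne_zero]
        omega
      exact this hcon.1
    · have hmc : ((m : ℕ) : ℚ_[q]) = (a : ℚ_[q]) ^ 2 + (b : ℚ_[q]) ^ 2 := by
        rw [hmdef]; push_cast; ring
      rw [hmc]
      linear_combination ((a : ℚ_[q]) ^ 2 + (b : ℚ_[q]) ^ 2) ^ 2 * hcd
end
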